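/- Let 0 < α < 1. For 3/4 < t < 1 and x_n > 0 with x_n² < 1-t, define I₂ = ∫_0^{1-t} s^{-α} exp(-x_n²/(4s)) ds. Then there exists c > 1 depending only on α such that c^{-1}(1-t)^{1-α} ≤ I₂ ≤ c(1-t)^{1-α}. -/
import Mathlib


open Real intervalIntegral

theorem stmt_14 (α : ℝ) (hα0 : 0 < α) (hα1 : α < 1) :
    ∃ c : ℝ, 1 < c ∧ ∀ t xn : ℝ, 3/4 < t → t < 1 → 0 < xn → xn ^ 2 < 1 - t →
      c⁻¹ * (1 - t) ^ (1 - α) ≤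
        (∫ s in (0:ℝ)..(1 - t), s ^ (-α) * Real.exp (-xn ^ 2 / (4 * s))) ∧
      (∫ s in (0:ℝ)..(1 - t), s ^ (-α) * Real.exp (-xn ^ 2 / (4 * s))) ≤
        c * (1 - t) ^ (1 - α) := by
  have he : (1:ℝ) ≤ Real.exp 1 := Real.one_le_exp zero_le_one
  refine ⟨2 * Real.exp 1 / (1 - α), ?_, ?_⟩
  · rw [lt_div_iff₀ (by linarith)]; nlinarith
  intro t xn ht3 ht1 hxn hxnL
  set L : ℝ := 1 - t with hLdef
  have hL : 0 < L := by simp [hLdef]; linarith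
  set f : ℝ → ℝ := fun s => s ^ (-α) * Real.exp (-xn ^ 2 / (4 * s)) with hf
  have hneg : (-1:ℝ) < -α := by linarith
  have hrint : IntervalIntegrable (fun s : ℝ => s ^ (-α)) MeasureTheory.volume 0 L :=
    intervalIntegrable_rpow' hneg
  have hexple : ∀ s : ℝ, 0 ≤ s → Real.exp (-xn ^ 2 / (4 * s)) ≤ 1 := by
    intro s hs
    rw [Real.exp_le_one_iff]
    apply div_nonpos_of_nonpos_of_nonneg <;> nlinarith
  have hint : IntervalIntegrable f MeasureTheory.volume 0 L := by
    apply hrint.mono_fun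
    · apply ContinuousOn.aestronglyMeasurable ?_ measurableSet_uIoc
      rw [Set.uIoc_of_le hL.le]
      apply ContinuousOn.mul
      · exact fun s hs => (Real.continuousAt_rpow_const s (-α) (Or.inl (ne_of_gt hs.1))).continuousWithinAt
      · apply Real.continuous_exp.comp_continuousOn
        apply ContinuousOn.div continuousOn_const (by fun_prop)
        intro s hs; have := hs.1; positivity
    · rw [Filter.EventuallyLE, MeasureTheory.ae_restrict_iff' measurableSet_uIoc]
      refine Filter.Eventually.of_forall fun s hs => ?_
      rw [Set.uIoc_of_le hL.le] at hs
      have h1 : 0 ≤ s ^ (-α) := Real.rpow_nonneg hs.1.le _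
      rw [Real.norm_eq_abs, Real.norm_eq_abs, abs_of_nonneg (by positivity), abs_of_nonneg h1]
      exact mul_le_of_le_one_right h1 (hexple s hs.1.le)
  have hfnn : ∀ s : ℝ, 0 ≤ s → 0 ≤ f s := by
    intro s hs; exact mul_nonneg (Real.rpow_nonneg hs _) (Real.exp_nonneg _)
  have hsub : Set.uIcc (L/2) L ⊆ Set.uIcc 0 L := by
    rw [Set.uIcc_of_le (by linarith), Set.uIcc_of_le hL.le]
    exact Set.Icc_subset_Icc (by linarith) le_rfl
  have hsub1 : Set.uIcc (0:ℝ) (L/2) ⊆ Set.uIcc 0 L := by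
    rw [Set.uIcc_of_le (by linarith), Set.uIcc_of_le hL.le]
    exact Set.Icc_subset_Icc le_rfl (by linarith)
  have hint1 : IntervalIntegrable f MeasureTheory.volume 0 (L/2) := hint.mono_set hsub1
  have hint2 : IntervalIntegrable f MeasureTheory.volume (L/2) L := hint.mono_set hsub
  have hLpow : (0:ℝ) < L ^ (1 - α) := Real.rpow_pos_of_pos hL _
  have hsplitL : L ^ (1 - α) = L * L ^ (-α) := by
    rw [show (1:ℝ) - α = 1 + (-α) by ring, Real.rpow_add hL, Real.rpow_one]
  constructor
  · -- lower bound
    rw [← integral_add_adjacent_intervals hint1 hint2]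
    have h1 : 0 ≤ ∫ s in (0:ℝ)..(L/2), f s := by
      apply intervalIntegral.integral_nonneg (by linarith)
      intro s hs; exact hfnn s hs.1
    have h2 : (L/2) * (L ^ (-α) * Real.exp (-1/2)) ≤ ∫ s in (L/2)..L, f s := by
      have := intervalIntegral.integral_mono_on (f := fun _ : ℝ => L ^ (-α) * Real.exp (-1/2))
        (g := f) (by linarith : L/2 ≤ L) (intervalIntegrable_const) hint2 ?_
      · rw [intervalIntegral.integral_const, smul_eq_mul] at this
        calc (L/2) * (L ^ (-α) * Real.exp (-1/2))
            = (L - L/2) * (L ^ (-α) * Real.exp (-1/2)) := by ring_nf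
          _ ≤ _ := this
      · intro s hs
        have hs0 : 0 < s := by have := hs.1; linarith
        have hb : L ^ (-α) ≤ s ^ (-α) := by
          apply Real.rpow_le_rpow_of_nonpos hs0 hs.2 (by linarith)
        have hexp : Real.exp (-1/2) ≤ Real.exp (-xn ^ 2 / (4 * s)) := by
          apply Real.exp_le_exp.2
          rw [div_le_div_iff₀ (by norm_num) (by linarith)]
          nlinarith [hs.1]
        exact mul_le_mul hb hexp (Real.exp_nonneg _) (Real.rpow_nonneg hs0.le _)
    have hkey : (2 * Real.exp 1 / (1 - α))⁻¹ * L ^ (1 - α) ≤ (L/2) * (L ^ (-α) * Real.exp (-1/2)) := by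
      rw [inv_div, hsplitL]
      have hexph : Real.exp (-1/2) * Real.exp 1 = Real.exp (1/2) := by
        rw [← Real.exp_add]; norm_num
      have h12 : (1:ℝ) ≤ Real.exp (1/2) := Real.one_le_exp (by norm_num)
      rw [div_mul_eq_mul_div, div_le_iff₀ (by positivity)]
      have hLa : (0:ℝ) ≤ L ^ (-α) := Real.rpow_nonneg hL.le _
      nlinarith [Real.exp_pos (-1/2 : ℝ), mul_nonneg (mul_nonneg hL.le hLa) (Real.exp_pos (-1/2 : ℝ)).le]
    linarith
  · -- upper bound
    have hmono : (∫ s in (0:ℝ)..L, f s) ≤ ∫ s in (0:ℝ)..L, s ^ (-α) := by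
      apply intervalIntegral.integral_mono_on hL.le hint hrint
      intro s hs
      exact mul_le_of_le_one_right (Real.rpow_nonneg hs.1 _) (hexple s hs.1)
    rw [integral_rpow (Or.inl hneg)] at hmono
    rw [Real.zero_rpow (by linarith : -α + 1 ≠ 0)] at hmono
    have heq : L ^ (-α + 1) = L ^ (1 - α) := by ring_nf
    rw [heq, show (-α + 1 : ℝ) = 1 - α by ring, sub_zero] at hmono
    have h1α : (0:ℝ) < 1 - α := by linarith
    have : L ^ (1 - α) / (1 - α) ≤ 2 * Real.exp 1 / (1 - α) * L ^ (1 - α) := by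
      rw [div_mul_eq_mul_div, div_le_div_iff₀ h1α h1α]
      nlinarith [mul_nonneg (mul_nonneg hLpow.le h1α.le)
        (show (0:ℝ) ≤ 2 * Real.exp 1 - 1 by linarith)]
    linarith
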